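/- For every sequence c : ℕ → ℕ with c_n ≥ 1, there exists a sequence a : ℕ → ℤ satisfying the Dold congruences Σ_{d ∣ n} μ(n/d) a(d) ≡ 0 (mod n) for all n, and with limsup_{n→∞} |a(n)|/c_n = ∞; indeed a(n) = -Σ_{p ∣ n, p prime} p^{e_p} works where e_p is chosen with p^{e_p} ≥ p · c_p. -/

import Mathlib

open Filter ArithmeticFunction

/-- For every positive sequence `c` there is a sequence `a : ℕ → ℤ` satisfying the
Dold congruences `n ∣ ∑_{d ∣ n} μ(n/d) a(d)` for all `n ≥ 1`, and with
`limsup |a n| / c n = ∞`; indeed `a n = -∑_{p ∣ n, p prime} p^{e_p}` works for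
`e` with `p^{e_p} ≥ p · c_p`. -/
theorem stmt_18 (c : ℕ → ℕ) (hc : ∀ n, 1 ≤ c n) :
    ∃ a : ℕ → ℤ,
      (∀ n : ℕ, 1 ≤ n →
        (n : ℤ) ∣ ∑ d ∈ n.divisors, (ArithmeticFunction.moebius (n / d) : ℤ) * a d) ∧
      Filter.limsup (fun n => ((|(a n : ℝ)| / (c n : ℝ) : ℝ) : EReal)) atTop = ⊤ ∧
      ∃ e : ℕ → ℕ, (∀ p : ℕ, p.Prime → (p : ℕ) ^ e p ≥ p * c p) ∧
        ∀ n, a n = -∑ p ∈ n.primeFactors, (p : ℤ) ^ e p := by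
  set e : ℕ → ℕ := fun p => p * c p with he
  set a : ℕ → ℤ := fun n => -∑ p ∈ n.primeFactors, (p : ℤ) ^ e p with ha
  set f : ℕ → ℤ := fun n => if n.Prime then -(n : ℤ) ^ e n else 0 with hf
  have hsum : ∀ n > 0, ∑ i ∈ n.divisors, f i = a n := by
    intro n hn
    have hfilter : n.primeFactors = n.divisors.filter Nat.Prime :=
      Nat.primeFactors_eq_to_filter_divisors_prime n
    rw [ha]
    simp only [hf]
    rw [Finset.sum_ite, Finset.sum_const_zero, add_zero, hfilter,
      ← Finset.sum_neg_distrib]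
  have hinv := (ArithmeticFunction.sum_eq_iff_sum_smul_moebius_eq
    (f := f) (g := a)).mp hsum
  refine ⟨a, ?_, ?_, e, ?_, fun n => rfl⟩
  · intro n hn
    have h := hinv n hn
    have : ∑ d ∈ n.divisors, (ArithmeticFunction.moebius (n / d) : ℤ) * a d =
        ∑ x ∈ n.divisorsAntidiagonal, (ArithmeticFunction.moebius x.1 : ℤ) * a x.2 := by
      rw [← Nat.sum_divisorsAntidiagonal' (f := fun x y => (ArithmeticFunction.moebius x : ℤ) * a y)]
    rw [this]
    have : ∑ x ∈ n.divisorsAntidiagonal, (ArithmeticFunction.moebius x.1 : ℤ) * a x.2 = f n := by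
      rw [← h]
      exact Finset.sum_congr rfl fun x _ => (zsmul_eq_mul _ _).symm
    rw [this, hf]
    by_cases hp : n.Prime
    · simp only [hp, if_true]
      rw [dvd_neg]
      exact dvd_pow_self (n : ℤ)
        (Nat.mul_ne_zero hp.pos.ne' (Nat.one_le_iff_ne_zero.mp (hc n)))
    · simp [hp]
  · -- limsup = ⊤
    rw [EReal.eq_top_iff_forall_lt]
    intro y
    have : ((y + 1 : ℝ) : EReal) ≤
        limsup (fun n => ((|(a n : ℝ)| / (c n : ℝ) : ℝ) : EReal)) atTop := by
      apply le_limsup_of_frequently_le'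
      rw [Filter.frequently_atTop]
      intro N
      obtain ⟨p, hpN, hp⟩ := Nat.exists_infinite_primes (max N (⌈y + 1⌉₊ + 1))
      refine ⟨p, le_trans (le_max_left _ _) hpN, ?_⟩
      have hap : a p = -(p : ℤ) ^ e p := by
        rw [ha]; simp [Nat.Prime.primeFactors hp]
      have hcp : (0 : ℝ) < (c p : ℝ) := by exact_mod_cast hc p
      have hpow : (p : ℝ) * (c p : ℝ) ≤ (p : ℝ) ^ e p := by
        have := Nat.lt_pow_self (n := e p) hp.one_lt
        have h2 : p * c p ≤ p ^ e p := le_of_lt (by simpa [he] using this)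
        exact_mod_cast h2
      have habs : |(a p : ℝ)| = (p : ℝ) ^ e p := by
        rw [hap]
        push_cast
        rw [abs_neg, abs_pow, abs_of_nonneg (by positivity)]
      have hyp : y + 1 ≤ (p : ℝ) := by
        have : ⌈y + 1⌉₊ + 1 ≤ p := le_trans (le_max_right _ _) hpN
        calc y + 1 ≤ (⌈y + 1⌉₊ : ℝ) := Nat.le_ceil _
          _ ≤ (p : ℝ) := by exact_mod_cast le_trans (Nat.le_succ _) this
      have : y + 1 ≤ |(a p : ℝ)| / (c p : ℝ) := by
        rw [habs, le_div_iff₀ hcp]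
        calc (y + 1) * (c p : ℝ) ≤ (p : ℝ) * (c p : ℝ) := by
              apply mul_le_mul_of_nonneg_right hyp hcp.le
          _ ≤ (p : ℝ) ^ e p := hpow
      exact_mod_cast EReal.coe_le_coe_iff.mpr this
    refine lt_of_lt_of_le ?_ this
    exact_mod_cast EReal.coe_lt_coe_iff.mpr (by linarith)
  · intro p hp
    have := Nat.lt_pow_self (n := e p) hp.one_lt
    simpa [he, ge_iff_le] using le_of_lt this
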